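/- Regularised PCA: Let A be a real n×m matrix of rank r, k ≤ r, D ∈ ℝ^{d×n}, G ∈ ℝ^{g×m}, λ, μ ≥ 0, L = DᵀD, M = GᵀG, and F(P,Q) = ‖A − PQᵀ‖² + λ‖DP‖² + μ‖GQ‖². Define the symmetric m×m matrix K = Aᵀ(Iₙ + λL)⁻¹A − μM. Then the constrained minimization of F(P,Q) over P ∈ ℝ^{n×k}, Q ∈ ℝ^{m×k} subject to QᵀQ = I_k is solved by taking the columns of Q to be orthonormal eigenvectors of K corresponding to its k largest eigenvalues and P = (Iₙ + λL)⁻¹AQ; the minimal value equals Tr(AAᵀ) minus the sum of the k largest eigenvalues of K. -/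

import Mathlib

open Matrix BigOperators

/-- Squared Frobenius norm of a real matrix. -/
noncomputable def frobSq {n m : ℕ} (X : Matrix (Fin n) (Fin m) ℝ) : ℝ :=
  ∑ i, ∑ j, (X i j) ^ 2

lemma frobSq_eq_trace {n m : ℕ} (X : Matrix (Fin n) (Fin m) ℝ) :
    frobSq X = Matrix.trace (Xᵀ * X) := by
  simp [frobSq, Matrix.trace, Matrix.mul_apply, Matrix.diag, sq]
  exact Finset.sum_comm

lemma frobSq_eq_trace' {n m : ℕ} (X : Matrix (Fin n) (Fin m) ℝ) :
    frobSq X = Matrix.trace (X * Xᵀ) := by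
  rw [frobSq_eq_trace, Matrix.trace_mul_comm]

lemma posdefB {n d : ℕ} (D : Matrix (Fin d) (Fin n) ℝ) (lam : ℝ) (hlam : 0 ≤ lam) :
    Matrix.PosDef (1 + lam • (Dᵀ * D)) := by
  apply Matrix.PosDef.add_posSemidef Matrix.PosDef.one
  have h := Matrix.posSemidef_conjTranspose_mul_self D
  rw [Matrix.conjTranspose_eq_transpose_of_trivial] at h
  refine Matrix.PosSemidef.of_dotProduct_mulVec_nonneg ?_ ?_
  · show (lam • (Dᵀ * D))ᴴ = _
    rw [Matrix.conjTranspose_smul, h.1]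
    simp
  · intro x
    rw [Matrix.smul_mulVec, dotProduct_smul]
    have := h.dotProduct_mulVec_nonneg x
    positivity

lemma tr_conj_nonneg {n k : ℕ} {B : Matrix (Fin n) (Fin n) ℝ} (hB : B.PosSemidef)
    (X : Matrix (Fin n) (Fin k) ℝ) : 0 ≤ Matrix.trace (Xᵀ * B * X) := by
  have h : ∀ i, (Xᵀ * B * X) i i = (fun a => X a i) ⬝ᵥ (B *ᵥ fun a => X a i) := by
    intro i
    simp [Matrix.mul_apply, Matrix.mulVec, dotProduct, Finset.mul_sum,
      Finset.sum_mul, mul_assoc]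
    rw [Finset.sum_comm]
  unfold Matrix.trace
  apply Finset.sum_nonneg
  intro i _
  have h2 := hB.dotProduct_mulVec_nonneg (fun a => X a i)
  simpa [Matrix.diag, h] using h2

lemma t1lem {n m k : ℕ} (A : Matrix (Fin n) (Fin m) ℝ)
    (P' : Matrix (Fin n) (Fin k) ℝ) (Q' : Matrix (Fin m) (Fin k) ℝ) (hQ' : Q'ᵀ*Q' = 1) :
    Matrix.trace ((A - P'*Q'ᵀ) * (A - P'*Q'ᵀ)ᵀ)
      = Matrix.trace (A*Aᵀ) - 2*Matrix.trace (P'ᵀ*(A*Q')) + Matrix.trace (P'ᵀ*P') := by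
  rw [transpose_sub, transpose_mul, transpose_transpose, Matrix.sub_mul, Matrix.mul_sub,
    Matrix.mul_sub, trace_sub, trace_sub, trace_sub]
  have e2 : Matrix.trace (A * (Q' * P'ᵀ)) = Matrix.trace (P'ᵀ * (A * Q')) := by
    rw [← Matrix.mul_assoc, trace_mul_comm]
  have e3 : Matrix.trace (P' * Q'ᵀ * Aᵀ) = Matrix.trace (P'ᵀ * (A * Q')) := by
    rw [← trace_transpose (P' * Q'ᵀ * Aᵀ), transpose_mul, transpose_mul, transpose_transpose,
      transpose_transpose]
    exact e2
  have e4 : Matrix.trace (P' * Q'ᵀ * (Q' * P'ᵀ)) = Matrix.trace (P'ᵀ * P') := by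
    rw [Matrix.mul_assoc, ← Matrix.mul_assoc Q'ᵀ, hQ', Matrix.one_mul, trace_mul_comm]
  rw [e2, e3, e4]; ring

lemma t3lem {n m k : ℕ} (A : Matrix (Fin n) (Fin m) ℝ) (B : Matrix (Fin n) (Fin n) ℝ)
    (hBsym : Bᵀ = B) (hBinv : B * B⁻¹ = 1)
    (P' : Matrix (Fin n) (Fin k) ℝ) (Q' : Matrix (Fin m) (Fin k) ℝ) :
    Matrix.trace ((P' - B⁻¹*(A*Q'))ᵀ * B * (P' - B⁻¹*(A*Q')))
      = Matrix.trace (P'ᵀ*B*P') - 2*Matrix.trace (P'ᵀ*(A*Q'))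
        + Matrix.trace (Q'ᵀ*(Aᵀ*(B⁻¹*(A*Q')))) := by
  have hIsym : B⁻¹ᵀ = B⁻¹ := by rw [Matrix.transpose_nonsing_inv, hBsym]
  set Pst := B⁻¹ * (A * Q') with hPst
  have h1 : B * Pst = A * Q' := by rw [hPst, ← Matrix.mul_assoc, hBinv, Matrix.one_mul]
  have h2 : Matrix.trace (P'ᵀ * B * Pst) = Matrix.trace (P'ᵀ * (A * Q')) := by
    rw [Matrix.mul_assoc, h1]
  have h3 : Matrix.trace (Pstᵀ * B * P') = Matrix.trace (P'ᵀ * (A * Q')) := by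
    rw [← trace_transpose (Pstᵀ * B * P'), transpose_mul, transpose_mul, transpose_transpose,
      hBsym, ← Matrix.mul_assoc]
    exact h2
  have h4 : Matrix.trace (Pstᵀ * B * Pst) = Matrix.trace (Q'ᵀ*(Aᵀ*(B⁻¹*(A*Q')))) := by
    rw [Matrix.mul_assoc, h1, hPst, transpose_mul, transpose_mul, hIsym,
      Matrix.mul_assoc, Matrix.mul_assoc]
  rw [transpose_sub, Matrix.sub_mul, Matrix.sub_mul, Matrix.mul_sub, Matrix.mul_sub,
    trace_sub, trace_sub, trace_sub, h2, h3, h4]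
  ring

lemma filter_sum {m k : ℕ} (hkm : k ≤ m) (f : Fin m → ℝ) :
    ∑ i : Fin k, f (Fin.castLE hkm i) = ∑ j : Fin m, if (j:ℕ) < k then f j else 0 := by
  rw [← Finset.sum_filter]
  have h : ∑ i : Fin k, f (Fin.castLE hkm i) = ∑ i : Fin k, f ((Fin.castLEEmb hkm) i) := rfl
  rw [h, ← Finset.sum_map Finset.univ (Fin.castLEEmb hkm) f]
  congr 1
  ext j
  simp only [Finset.mem_map, Finset.mem_univ, true_and, Finset.mem_filter, Fin.castLEEmb_apply]
  constructor
  · rintro ⟨i, rfl⟩; exact i.isLt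
  · intro hj; exact ⟨⟨j.val, hj⟩, by ext; simp⟩

lemma kyfan {m k : ℕ} (hkm : k ≤ m) (eig : Fin m → ℝ)
    (hsorted : ∀ i j : Fin m, i ≤ j → eig j ≤ eig i) (c : Fin m → ℝ)
    (hc0 : ∀ j, 0 ≤ c j) (hc1 : ∀ j, c j ≤ 1) (hsum : ∑ j, c j = (k : ℝ)) :
    ∑ j, eig j * c j ≤ ∑ i : Fin k, eig (Fin.castLE hkm i) := by
  rcases Nat.eq_zero_or_pos k with hk | hk
  · subst hk
    have h : ∀ j ∈ Finset.univ, c j = 0 :=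
      (Finset.sum_eq_zero_iff_of_nonneg (fun j _ => hc0 j)).mp (by simpa using hsum)
    simp only [Finset.univ_eq_empty, Finset.sum_empty]
    apply le_of_eq
    apply Finset.sum_eq_zero
    intro j hj
    rw [h j hj, mul_zero]
  · have hk1 : k - 1 < m := by omega
    set t := eig ⟨k-1, hk1⟩ with ht
    have key : ∀ j : Fin m, eig j * c j ≤ (if (j:ℕ) < k then eig j - t else 0) + t * c j := by
      intro j
      by_cases hj : (j:ℕ) < k
      · simp only [hj, if_pos]
        have h1 : t ≤ eig j := hsorted j ⟨k-1, hk1⟩ (by simp [Fin.le_def]; omega)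
        nlinarith [hc1 j, hc0 j]
      · simp only [hj, if_neg, not_false_iff, zero_add]
        have h1 : eig j ≤ t := hsorted ⟨k-1, hk1⟩ j (by simp [Fin.le_def]; omega)
        nlinarith [hc0 j]
    calc ∑ j, eig j * c j ≤ ∑ j : Fin m, ((if (j:ℕ) < k then eig j - t else 0) + t * c j) :=
          Finset.sum_le_sum fun j _ => key j
      _ = (∑ j : Fin m, if (j:ℕ) < k then eig j - t else 0) + t * (k:ℝ) := by
          rw [Finset.sum_add_distrib, ← Finset.mul_sum, hsum]
      _ = ∑ i : Fin k, eig (Fin.castLE hkm i) := by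
          rw [← filter_sum hkm (fun j => eig j - t)]
          rw [Finset.sum_sub_distrib]
          simp only [Finset.sum_const, Finset.card_univ, Fintype.card_fin, nsmul_eq_mul]
          ring

/-- **Regularised PCA.** Minimising
`F(P,Q) = ‖A - PQᵀ‖² + λ‖DP‖² + μ‖GQ‖²` subject to `QᵀQ = Iₖ` is solved by
taking the columns of `Q` to be orthonormal eigenvectors of
`K = Aᵀ(Iₙ + λL)⁻¹A - μM` for its `k` largest eigenvalues, and
`P = (Iₙ + λL)⁻¹ A Q`; the minimal value is `Tr(AAᵀ)` minus the sum of the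
`k` largest eigenvalues of `K`. -/
theorem regularised_pca {n m d g r k : ℕ} (hkr : k ≤ r) (hkm : k ≤ m)
    (A : Matrix (Fin n) (Fin m) ℝ) (hrank : A.rank = r)
    (D : Matrix (Fin d) (Fin n) ℝ) (G : Matrix (Fin g) (Fin m) ℝ)
    (lam mu : ℝ) (hlam : 0 ≤ lam) (hmu : 0 ≤ mu)
    (L : Matrix (Fin n) (Fin n) ℝ) (hL : L = Dᵀ * D)
    (M : Matrix (Fin m) (Fin m) ℝ) (hM : M = Gᵀ * G)
    (F : Matrix (Fin n) (Fin k) ℝ → Matrix (Fin m) (Fin k) ℝ → ℝ)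
    (hF : ∀ P Q, F P Q = frobSq (A - P * Qᵀ) + lam * frobSq (D * P) + mu * frobSq (G * Q))
    (K : Matrix (Fin m) (Fin m) ℝ)
    (hK : K = Aᵀ * (1 + lam • L)⁻¹ * A - mu • M)
    -- a complete orthonormal system of eigenvectors of `K`,
    -- with eigenvalues sorted in decreasing order
    (w : Fin m → (Fin m → ℝ)) (eig : Fin m → ℝ)
    (hortho : ∀ i j, w i ⬝ᵥ w j = if i = j then (1 : ℝ) else 0)
    (heig : ∀ i, K *ᵥ w i = eig i • w i)
    (hsorted : ∀ i j, i ≤ j → eig j ≤ eig i)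
    (Q : Matrix (Fin m) (Fin k) ℝ) (hQ : Q = Matrix.of fun a i => w (Fin.castLE hkm i) a)
    (P : Matrix (Fin n) (Fin k) ℝ) (hP : P = (1 + lam • L)⁻¹ * A * Q) :
    Qᵀ * Q = 1 ∧
    (∀ (P' : Matrix (Fin n) (Fin k) ℝ) (Q' : Matrix (Fin m) (Fin k) ℝ),
        Q'ᵀ * Q' = 1 → F P Q ≤ F P' Q') ∧
    F P Q = Matrix.trace (A * Aᵀ) - ∑ i : Fin k, eig (Fin.castLE hkm i) := by
  -- the matrix B and its basic properties
  set B : Matrix (Fin n) (Fin n) ℝ := 1 + lam • L with hB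
  have hBpos : B.PosDef := by rw [hB, hL]; exact posdefB D lam hlam
  have hBsym : Bᵀ = B := by
    rw [hB, hL, transpose_add, transpose_one, transpose_smul, transpose_mul,
      transpose_transpose]
  have hBinv : B * B⁻¹ = 1 :=
    Matrix.mul_nonsing_inv B ((Matrix.isUnit_iff_isUnit_det B).mp hBpos.isUnit)
  -- orthonormality of Q
  have hQQ : Qᵀ * Q = 1 := by
    ext i j
    have h := hortho (Fin.castLE hkm i) (Fin.castLE hkm j)
    have hiff : (Fin.castLE hkm i = Fin.castLE hkm j) ↔ i = j := by
      constructor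
      · intro hcast; exact Fin.ext (by simpa [Fin.ext_iff] using hcast)
      · rintro rfl; rfl
    simp only [Matrix.mul_apply, Matrix.transpose_apply, hQ, Matrix.of_apply,
      Matrix.one_apply]
    rw [show (∑ a, w (Fin.castLE hkm i) a * w (Fin.castLE hkm j) a)
        = w (Fin.castLE hkm i) ⬝ᵥ w (Fin.castLE hkm j) from rfl, h]
    simp [hiff]
  -- the eigenvector matrix W
  set W : Matrix (Fin m) (Fin m) ℝ := Matrix.of w with hW
  have hWWt : W * Wᵀ = 1 := by
    ext i j
    have h := hortho i j
    simpa [Matrix.mul_apply, dotProduct, Matrix.one_apply, hW] using h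
  have hWtW : Wᵀ * W = 1 := mul_eq_one_comm.mp hWWt
  have hKW : K * Wᵀ = Wᵀ * diagonal eig := by
    ext a j
    have h := congrFun (heig j) a
    simp only [Matrix.mulVec, dotProduct, Pi.smul_apply, smul_eq_mul] at h
    simp only [Matrix.mul_apply, Matrix.transpose_apply, hW, Matrix.of_apply,
      Matrix.diagonal_apply, mul_ite, mul_zero, Finset.sum_ite_eq', Finset.mem_univ, if_pos]
    rw [h, mul_comm]
  have hKdec : K = Wᵀ * diagonal eig * W := by
    have h : K * (Wᵀ * W) = Wᵀ * diagonal eig * W := by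
      rw [← Matrix.mul_assoc, hKW]
    rwa [hWtW, Matrix.mul_one] at h
  -- general expansion of F
  have hexp : ∀ (P' : Matrix (Fin n) (Fin k) ℝ) (Q' : Matrix (Fin m) (Fin k) ℝ),
      Q'ᵀ * Q' = 1 →
      F P' Q' = Matrix.trace (A*Aᵀ)
        + Matrix.trace ((P' - B⁻¹*(A*Q'))ᵀ * B * (P' - B⁻¹*(A*Q')))
        - Matrix.trace (Q'ᵀ * K * Q') := by
    intro P' Q' hQ'
    have e1 : frobSq (A - P'*Q'ᵀ)
        = Matrix.trace (A*Aᵀ) - 2*Matrix.trace (P'ᵀ*(A*Q')) + Matrix.trace (P'ᵀ*P') := by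
      rw [frobSq_eq_trace', t1lem A P' Q' hQ']
    have e2 : frobSq (D*P') = Matrix.trace (P'ᵀ*(L*P')) := by
      rw [frobSq_eq_trace]
      congr 1
      rw [hL, transpose_mul]
      simp [Matrix.mul_assoc]
    have e3 : frobSq (G*Q') = Matrix.trace (Q'ᵀ*(M*Q')) := by
      rw [frobSq_eq_trace]
      congr 1
      rw [hM, transpose_mul]
      simp [Matrix.mul_assoc]
    have eB : Matrix.trace (P'ᵀ*B*P')
        = Matrix.trace (P'ᵀ*P') + lam * Matrix.trace (P'ᵀ*(L*P')) := by
      rw [hB, Matrix.mul_assoc, Matrix.add_mul, Matrix.one_mul, Matrix.smul_mul,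
        Matrix.mul_add, Matrix.mul_smul, trace_add, trace_smul, smul_eq_mul]
    have eK : Matrix.trace (Q'ᵀ*K*Q')
        = Matrix.trace (Q'ᵀ*(Aᵀ*(B⁻¹*(A*Q')))) - mu * Matrix.trace (Q'ᵀ*(M*Q')) := by
      rw [hK]
      rw [show Aᵀ * (1 + lam • L)⁻¹ * A - mu • M = Aᵀ * B⁻¹ * A - mu • M from rfl]
      rw [Matrix.mul_assoc, Matrix.sub_mul, Matrix.smul_mul, Matrix.mul_sub,
        Matrix.mul_smul, trace_sub, trace_smul, smul_eq_mul]
      congr 2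
      simp [Matrix.mul_assoc]
    have eX := t3lem A B hBsym hBinv P' Q'
    rw [hF, e1, e2, e3, eK, eX, eB]
    ring
  -- trace of QᵀKQ at the optimum
  have hKQ : Matrix.trace (Qᵀ * K * Q) = ∑ i : Fin k, eig (Fin.castLE hkm i) := by
    have hKQ' : K * Q = Matrix.of (fun a i => eig (Fin.castLE hkm i) * w (Fin.castLE hkm i) a) := by
      ext a i
      have h := congrFun (heig (Fin.castLE hkm i)) a
      simp only [Matrix.mulVec, dotProduct, Pi.smul_apply, smul_eq_mul] at h
      simp only [Matrix.mul_apply, hQ, Matrix.of_apply]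
      exact h
    rw [Matrix.mul_assoc, hKQ']
    unfold Matrix.trace
    simp only [Matrix.diag, Matrix.mul_apply, Matrix.transpose_apply, hQ, Matrix.of_apply]
    apply Finset.sum_congr rfl
    intro i _
    have h : w (Fin.castLE hkm i) ⬝ᵥ w (Fin.castLE hkm i) = 1 := by
      simpa using hortho (Fin.castLE hkm i) (Fin.castLE hkm i)
    rw [show (∑ a, w (Fin.castLE hkm i) a * (eig (Fin.castLE hkm i) * w (Fin.castLE hkm i) a))
        = eig (Fin.castLE hkm i) * ∑ a, w (Fin.castLE hkm i) a * w (Fin.castLE hkm i) a by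
          rw [Finset.mul_sum]; exact Finset.sum_congr rfl fun a _ => by ring]
    rw [show (∑ a, w (Fin.castLE hkm i) a * w (Fin.castLE hkm i) a)
        = w (Fin.castLE hkm i) ⬝ᵥ w (Fin.castLE hkm i) from rfl, h, mul_one]
  -- value at the optimum
  have hPQ : P - B⁻¹ * (A * Q) = 0 := by
    rw [hP, show (1 + lam • L)⁻¹ = B⁻¹ from rfl, Matrix.mul_assoc, sub_self]
  have hFPQ : F P Q = Matrix.trace (A * Aᵀ) - ∑ i : Fin k, eig (Fin.castLE hkm i) := by
    rw [hexp P Q hQQ, hPQ, hKQ]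
    simp
  -- the Ky Fan bound for arbitrary Q'
  have hbound : ∀ Q' : Matrix (Fin m) (Fin k) ℝ, Q'ᵀ * Q' = 1 →
      Matrix.trace (Q'ᵀ * K * Q') ≤ ∑ i : Fin k, eig (Fin.castLE hkm i) := by
    intro Q' hQ'
    set C : Matrix (Fin m) (Fin k) ℝ := W * Q' with hC
    set c : Fin m → ℝ := fun j => ∑ i, (C j i)^2 with hc
    have hCC : Cᵀ * C = 1 := by
      rw [hC, transpose_mul, Matrix.mul_assoc, ← Matrix.mul_assoc Wᵀ W Q', hWtW,
        Matrix.one_mul, hQ']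
    have htr : Matrix.trace (Q'ᵀ * K * Q') = ∑ j, eig j * c j := by
      rw [hKdec]
      have hform : Q'ᵀ * (Wᵀ * diagonal eig * W) * Q' = Cᵀ * (diagonal eig * C) := by
        rw [hC, transpose_mul]
        simp [Matrix.mul_assoc]
      rw [hform]
      unfold Matrix.trace
      simp only [Matrix.diag, Matrix.mul_apply, Matrix.transpose_apply,
        Matrix.diagonal_apply, ite_mul, zero_mul, Finset.sum_ite_eq, Finset.mem_univ, if_true]
      rw [Finset.sum_comm]
      apply Finset.sum_congr rfl
      intro j _
      rw [hc, Finset.mul_sum]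
      apply Finset.sum_congr rfl
      intro i _
      ring
    have hc0 : ∀ j, 0 ≤ c j := by
      intro j; rw [hc]; positivity
    have hcsum : ∑ j, c j = (k : ℝ) := by
      have h : ∑ j, c j = Matrix.trace (Cᵀ * C) := by
        unfold Matrix.trace
        simp only [hc, Matrix.diag, Matrix.mul_apply, Matrix.transpose_apply, sq]
        rw [Finset.sum_comm]
      rw [h, hCC, trace_one]
      simp
    have hc1 : ∀ j, c j ≤ 1 := by
      intro j
      set N : Matrix (Fin m) (Fin m) ℝ := C * Cᵀ with hN
      have hNidem : N * N = N := by
        rw [hN, Matrix.mul_assoc, ← Matrix.mul_assoc Cᵀ C Cᵀ, hCC, Matrix.one_mul]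
      have hNsymm : ∀ p q, N p q = N q p := by
        intro p q
        simp only [hN, Matrix.mul_apply, Matrix.transpose_apply]
        exact Finset.sum_congr rfl fun a _ => mul_comm _ _
      have hcN : c j = N j j := by
        simp only [hc, hN, Matrix.mul_apply, Matrix.transpose_apply, sq]
      have hsq : N j j = ∑ i, (N j i)^2 := by
        conv_lhs => rw [← hNidem]
        simp only [Matrix.mul_apply, sq]
        exact Finset.sum_congr rfl fun i _ => by rw [hNsymm i j]
      have hge : (N j j)^2 ≤ N j j := by
        conv_rhs => rw [hsq]
        exact Finset.single_le_sum (fun i _ => sq_nonneg (N j i)) (Finset.mem_univ j)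
      have h0 : 0 ≤ N j j := by rw [← hcN]; exact hc0 j
      nlinarith [hge, h0, hcN]
    calc Matrix.trace (Q'ᵀ * K * Q') = ∑ j, eig j * c j := htr
      _ ≤ ∑ i : Fin k, eig (Fin.castLE hkm i) := kyfan hkm eig hsorted c hc0 hc1 hcsum
  refine ⟨hQQ, ?_, hFPQ⟩
  intro P' Q' hQ'
  rw [hFPQ, hexp P' Q' hQ']
  have h1 := tr_conj_nonneg hBpos.posSemidef (P' - B⁻¹*(A*Q'))
  have h2 := hbound Q' hQ'
  linarith
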